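/- Let π: ℤ → ℤ be a bijection and for a ∈ ℤ define L_a(π) = #{(i,j) : i ≤ a < j, π(i) = j} and R_a(π) = #{(i,j) : j ≤ a < i, π(i) = j}. Suppose L_a(π) and R_a(π) are finite for all a. Then the flow F_a(π) := L_a(π) - R_a(π) is constant in a, i.e., F_{a-1}(π) = F_a(π) for every a ∈ ℤ. -/

import Mathlib

open scoped Classical in
private lemma ncard_diff_singleton_int {s : Set ℤ} (hs : s.Finite) (x : ℤ) :
    ((s \ {x}).ncard : ℤ) = (s.ncard : ℤ) - (if x ∈ s then 1 else 0) := by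
  by_cases hx : x ∈ s
  · rw [Set.ncard_diff_singleton_of_mem hx, if_pos hx]
    have h1 : 0 < s.ncard := (Set.ncard_pos hs).mpr ⟨x, hx⟩
    omega
  · rw [Set.diff_singleton_eq_self hx, if_neg hx]
    ring

/-- For a bijection `π : ℤ → ℤ` with `L_a(π) = #{i ≤ a : π i > a}` and
`R_a(π) = #{i > a : π i ≤ a}` finite for every `a`, the flow `F_a(π) = L_a(π) - R_a(π)`
is constant in `a`: `F_{a-1}(π) = F_a(π)` for every `a ∈ ℤ`. -/
theorem flow_constant (π : Equiv.Perm ℤ)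
    (hL : ∀ a : ℤ, {i : ℤ | i ≤ a ∧ a < π i}.Finite)
    (hR : ∀ a : ℤ, {i : ℤ | a < i ∧ π i ≤ a}.Finite) :
    ∀ a : ℤ,
      ({i : ℤ | i ≤ a - 1 ∧ a - 1 < π i}.ncard : ℤ)
        - ({i : ℤ | a - 1 < i ∧ π i ≤ a - 1}.ncard : ℤ)
      = ({i : ℤ | i ≤ a ∧ a < π i}.ncard : ℤ)
        - ({i : ℤ | a < i ∧ π i ≤ a}.ncard : ℤ) := by
  intro a
  set b := π.symm a with hb
  have hπb : π b = a := π.apply_symm_apply a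
  have hiff : ∀ i : ℤ, π i = a ↔ i = b := by
    intro i
    constructor
    · intro h; exact π.injective (h.trans hπb.symm)
    · rintro rfl; exact hπb
  set S : Set ℤ := {i | i ≤ a ∧ a ≤ π i} with hSdef
  set T : Set ℤ := {i | a ≤ i ∧ π i ≤ a} with hTdef
  have hSfin : S.Finite := by
    apply ((hL (a - 1)).insert a).subset
    rintro i ⟨h1, h2⟩
    rcases eq_or_lt_of_le h1 with rfl | h
    · exact Set.mem_insert _ _
    · exact Set.mem_insert_of_mem _ ⟨by omega, by omega⟩
  have hTfin : T.Finite := by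
    apply ((hR (a - 1)).insert b).subset
    rintro i ⟨h1, h2⟩
    rcases eq_or_lt_of_le h2 with h | h
    · exact ((hiff i).mp h) ▸ Set.mem_insert _ _
    · exact Set.mem_insert_of_mem _ ⟨by omega, by omega⟩
  have e1 : {i : ℤ | i ≤ a - 1 ∧ a - 1 < π i} = S \ {a} := by
    ext i
    simp only [hSdef, Set.mem_diff, Set.mem_setOf_eq, Set.mem_singleton_iff]
    omega
  have e2 : {i : ℤ | i ≤ a ∧ a < π i} = S \ {b} := by
    ext i
    simp only [hSdef, Set.mem_diff, Set.mem_setOf_eq, Set.mem_singleton_iff, ← hiff i]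
    omega
  have e3 : {i : ℤ | a - 1 < i ∧ π i ≤ a - 1} = T \ {b} := by
    ext i
    simp only [hTdef, Set.mem_diff, Set.mem_setOf_eq, Set.mem_singleton_iff, ← hiff i]
    omega
  have e4 : {i : ℤ | a < i ∧ π i ≤ a} = T \ {a} := by
    ext i
    simp only [hTdef, Set.mem_diff, Set.mem_setOf_eq, Set.mem_singleton_iff]
    omega
  rw [e1, e2, e3, e4, ncard_diff_singleton_int hSfin, ncard_diff_singleton_int hSfin,
    ncard_diff_singleton_int hTfin, ncard_diff_singleton_int hTfin]
  have hmemSa : a ∈ S ↔ a ≤ π a := by simp [hSdef]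
  have hmemTa : a ∈ T ↔ π a ≤ a := by simp [hTdef]
  have hmemSb : b ∈ S ↔ b ≤ a := by simp [hSdef, hπb]
  have hmemTb : b ∈ T ↔ a ≤ b := by simp [hTdef, hπb]
  have hfix : π a = a ↔ a = b := hiff a
  simp only [hmemSa, hmemTa, hmemSb, hmemTb]
  rcases lt_trichotomy b a with h | h | h
  · have hne : ¬ (π a = a) := fun hh => absurd (hfix.mp hh) (by omega)
    split_ifs <;> omega
  · have heq : π a = a := hfix.mpr h.symm
    split_ifs <;> omega
  · have hne : ¬ (π a = a) := fun hh => absurd (hfix.mp hh) (by omega)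
    split_ifs <;> omega
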